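/- Let V_i(t, x), i = 1,…,n, be C¹ functions and V(t, x) = maxᵢ V_i(t, x). Along a C¹ trajectory x(t), the upper Dini derivative of t ↦ V(t, x(t)) satisfies D⁺V(t, x(t)) = max_{i ∈ I(t)} (d/dt)V_i(t, x(t)), where I(t) = {i : V(t, x(t)) = V_i(t, x(t))} is the set of maximizing indices at time t. -/

import Mathlib

open Filter Set Finset

theorem dini_aux (n : ℕ) (hn : 0 < n) (g : Fin n → ℝ → ℝ)
    (hg : ∀ i, ContDiff ℝ 1 (g i)) (t : ℝ) :
    Filter.limsup (fun s => ((⨆ i, g i (t + s)) - ⨆ i, g i t) / s) (nhdsWithin 0 (Set.Ioi 0)) =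
    ⨆ i : {i : Fin n // (⨆ j, g j t) = g i t}, deriv (fun s => g i.1 s) t := by
  classical
  haveI : Nonempty (Fin n) := Fin.pos_iff_nonempty.mp hn
  have hder : ∀ i, HasDerivAt (g i) (deriv (g i) t) t := fun i =>
    (((hg i).differentiable one_ne_zero) t).hasDerivAt
  set A : Finset (Fin n) := Finset.univ.filter (fun i => (⨆ j, g j t) = g i t) with hA
  have hAne : A.Nonempty := by
    obtain ⟨i, hi⟩ := exists_eq_ciSup_of_finite (f := fun i => g i t)
    exact ⟨i, by simp [hA, hi]⟩
  have hmemA : ∀ i, i ∈ A ↔ (⨆ j, g j t) = g i t := by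
    intro i; simp [hA]
  have hub : ∀ i s, g i s ≤ ⨆ j, g j s := fun i s =>
    le_ciSup (Set.finite_range fun j => g j s).bddAbove i
  -- tendsto t + s
  have htend0 : Tendsto (fun s : ℝ => t + s) (nhdsWithin 0 (Set.Ioi 0)) (nhds t) := by
    have : Tendsto (fun s : ℝ => t + s) (nhds 0) (nhds (t + 0)) :=
      (continuous_const.add continuous_id).tendsto 0
    simpa using this.mono_left nhdsWithin_le_nhds
  have htendne : Tendsto (fun s : ℝ => t + s) (nhdsWithin 0 (Set.Ioi 0)) (nhdsWithin t {t}ᶜ) := by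
    apply tendsto_nhdsWithin_of_tendsto_nhds_of_eventually_within _ htend0
    filter_upwards [self_mem_nhdsWithin] with s hs
    simp only [Set.mem_compl_iff, Set.mem_singleton_iff]
    intro h
    have : s = 0 := by linarith [h]
    exact absurd this (ne_of_gt hs)
  have hslope : ∀ i, Tendsto (fun s => (g i (t + s) - g i t) / s)
      (nhdsWithin 0 (Set.Ioi 0)) (nhds (deriv (g i) t)) := by
    intro i
    have h1 := (hasDerivAt_iff_tendsto_slope.mp (hder i)).comp htendne
    refine h1.congr fun s => ?_
    simp [slope_def_field, Function.comp]
  -- continuity tendsto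
  have hcont : ∀ i, Tendsto (fun s => g i (t + s)) (nhdsWithin 0 (Set.Ioi 0)) (nhds (g i t)) :=
    fun i => ((hg i).continuous.tendsto t).comp htend0
  obtain ⟨i0, hi0⟩ := id hAne
  have hi0' : (⨆ j, g j t) = g i0 t := (hmemA i0).mp hi0
  -- eventually all i bounded by A-sup
  have hev : ∀ᶠ s in nhdsWithin (0:ℝ) (Set.Ioi 0),
      ∀ i, g i (t + s) ≤ A.sup' hAne (fun j => g j (t + s)) := by
    rw [Filter.eventually_all]
    intro i
    by_cases hiA : i ∈ A
    · exact Eventually.of_forall fun s => Finset.le_sup' (f := fun j => g j (t + s)) hiA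
    · have hlt : g i t < g i0 t := by
        rw [← hi0']
        exact lt_of_le_of_ne (hub i t) (fun h => hiA ((hmemA i).mpr h.symm))
      filter_upwards [(hcont i).eventually_lt (hcont i0) hlt] with s hs
      exact hs.le.trans (Finset.le_sup' (f := fun j => g j (t + s)) hi0)
  have key : ∀ᶠ s in nhdsWithin (0:ℝ) (Set.Ioi 0),
      ((⨆ i, g i (t + s)) - ⨆ i, g i t) / s
        = A.sup' hAne (fun i => (g i (t + s) - g i t) / s) := by
    filter_upwards [hev, self_mem_nhdsWithin] with s hs hspos
    have h1 : (⨆ i, g i (t + s)) = A.sup' hAne (fun j => g j (t + s)) := by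
      apply le_antisymm
      · exact ciSup_le hs
      · exact Finset.sup'_le _ _ fun i _ => hub i (t + s)
    rw [h1]
    have h2 : ∀ a b : ℝ, (max a b - (⨆ i, g i t)) / s
        = max ((a - (⨆ i, g i t)) / s) ((b - (⨆ i, g i t)) / s) := by
      intro a b
      rw [max_div_div_right (le_of_lt hspos), max_sub_sub_right]
    have h3 := Finset.comp_sup'_eq_sup'_comp (s := A) (f := fun j => g j (t + s)) hAne
      (fun v => (v - (⨆ i, g i t)) / s) (fun a b => h2 a b)
    simp only [Function.comp] at h3
    rw [h3]
    apply Finset.sup'_congr hAne rfl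
    intro i hi
    rw [(hmemA i).mp hi]
  have hsup : Tendsto (fun s => A.sup' hAne (fun i => (g i (t + s) - g i t) / s))
      (nhdsWithin 0 (Set.Ioi 0)) (nhds (A.sup' hAne fun i => deriv (g i) t)) :=
    Filter.Tendsto.finset_sup'_nhds_apply hAne fun i _ => hslope i
  have hq : Tendsto (fun s => ((⨆ i, g i (t + s)) - ⨆ i, g i t) / s)
      (nhdsWithin 0 (Set.Ioi 0)) (nhds (A.sup' hAne fun i => deriv (g i) t)) :=
    hsup.congr' (key.mono fun s h => h.symm)
  rw [hq.limsup_eq]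
  -- relate Finset.sup' to ciSup over subtype
  haveI : Nonempty {i : Fin n // (⨆ j, g j t) = g i t} := ⟨⟨i0, hi0'⟩⟩
  apply le_antisymm
  · apply Finset.sup'_le
    intro i hi
    exact le_ciSup (f := fun i : {i : Fin n // (⨆ j, g j t) = g i t} =>
      deriv (fun s => g i.1 s) t) (Set.finite_range _).bddAbove ⟨i, (hmemA i).mp hi⟩
  · exact ciSup_le fun i => Finset.le_sup' (f := fun j => deriv (g j) t) ((hmemA i.1).mpr i.2)

theorem dini_derivative_of_max (n m : ℕ) (hn : 0 < n)
    (Vi : Fin n → ℝ → (Fin m → ℝ) → ℝ)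
    (hVi : ∀ i, ContDiff ℝ 1 (fun p : ℝ × (Fin m → ℝ) => Vi i p.1 p.2))
    (x : ℝ → Fin m → ℝ) (hx : ContDiff ℝ 1 x) :
    ∀ t : ℝ,
      Filter.limsup
        (fun s => ((⨆ i, Vi i (t + s) (x (t + s))) - ⨆ i, Vi i t (x t)) / s)
        (nhdsWithin 0 (Set.Ioi 0)) =
      ⨆ i : {i : Fin n // (⨆ j, Vi j t (x t)) = Vi i t (x t)},
        deriv (fun s => Vi i.1 s (x s)) t := by
  intro t
  exact dini_aux n hn (fun i s => Vi i s (x s))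
    (fun i => (hVi i).comp (contDiff_id.prodMk hx)) t
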